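/- Let X be a separable metrizable space and let (X_s)_{s∈T} be a Sierpiński stratification of X. Let T' = {∅} ∪ { ⟨n⟩⌢(s₁*⋯*sₙ) : n ∈ ℕ, s₁*⋯*sₙ ∈ Tⁿ }, where Tⁿ = { s₁*⋯*sₙ : s₁,…,sₙ ∈ T, |s₁| = ⋯ = |sₙ| } is the tree of n-tuples of equal-length nodes of T ordered coordinatewise. Define Y_∅ = ℱ(X) and Y_{⟨n⟩⌢(s₁*⋯*sₙ)} = φₙ[X_{s₁} × ⋯ × X_{sₙ}] ⊆ ℱ(X). Then (Y_t)_{t∈T'} is a Sierpiński stratification of ℱ(X). -/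

import Mathlib

open Set Topology Filter

/-- The Vietoris topology on `Set X` induced by a topology `t` on `X`, generated by the
subbasic sets `{F | F ⊆ U}` and `{F | F ∩ U ≠ ∅}` for `U` open in `t`. -/
def vietoris {X : Type*} (t : TopologicalSpace X) : TopologicalSpace (Set X) :=
  TopologicalSpace.generateFrom
    {S | (∃ U : Set X, IsOpen[t] U ∧ S = {F : Set X | F ⊆ U}) ∨
         (∃ U : Set X, IsOpen[t] U ∧ S = {F : Set X | (F ∩ U).Nonempty})}

/-- `ℱ(X)`: the hyperspace of nonempty finite subsets of `X`. -/
def FinHyp (X : Type*) : Type _ := {F : Set X // F.Finite ∧ F.Nonempty}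

noncomputable instance FinHyp.instCoeOut {X : Type*} : CoeOut (FinHyp X) (Set X) :=
  ⟨Subtype.val⟩

/-- `ℱ(X)` carries the (subspace) Vietoris topology. -/
instance FinHyp.instTopologicalSpace {X : Type*} [t : TopologicalSpace X] :
    TopologicalSpace (FinHyp X) :=
  (vietoris t).induced Subtype.val

/-- `(Xs s)_{s ∈ T}` is a Sierpiński stratification of the space `X`:
`T` is a nonempty tree over a countable alphabet `A` (a nonempty, prefix-closed set of
finite sequences), each `Xs s` is closed, `Xs ∅ = X`, each `Xs s` is the union of the
`Xs t` for `t` an immediate successor of `s` in `T`, and along every infinite branch the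
sets converge to a point. -/
structure IsSierpinskiStratification {X : Type*} [TopologicalSpace X] {A : Type*}
    (T : Set (List A)) (Xs : List A → Set X) : Prop where
  countable_alphabet : Countable A
  nonempty : T.Nonempty
  prefix_closed : ∀ l ∈ T, ∀ l' : List A, l' <+: l → l' ∈ T
  isClosed : ∀ s ∈ T, IsClosed (Xs s)
  root : Xs [] = Set.univ
  succ_eq : ∀ s ∈ T, Xs s = ⋃ t ∈ {t | t ∈ T ∧ ∃ a : A, t = s ++ [a]}, Xs t
  branch_converges : ∀ σ : ℕ → A, (∀ k : ℕ, (List.range k).map σ ∈ T) →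
    ∃ p : X, ∀ V ∈ nhds p, ∀ᶠ k in Filter.atTop, Xs ((List.range k).map σ) ⊆ V

/-- The node `⟨n⟩⌢(s₁*⋯*sₙ)` of the tree `T'`: the letter `n` followed by the node
`s₁*⋯*sₙ` of `Tⁿ` (encoded as a list over `Fin n → A`), written over the common alphabet
`ℕ ⊕ (Σ m : ℕ, Fin m → A)`. -/
def encodeNode {A : Type*} (n : ℕ) (l : List (Fin n → A)) :
    List (ℕ ⊕ (Σ m : ℕ, Fin m → A)) :=
  Sum.inl n :: l.map (fun f => Sum.inr ⟨n, f⟩)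

lemma isClosed_witness {X : Type*} [tX : TopologicalSpace X] [T2Space X]
    {n : ℕ} {C : Fin n → Set X} (hC : ∀ i, IsClosed (C i)) :
    IsClosed {F : FinHyp X | ∃ f : Fin n → X, (∀ i, f i ∈ C i) ∧ (F : Set X) = Set.range f} := by
  classical
  letI : TopologicalSpace (Set X) := vietoris tX
  have hcont : Continuous (Subtype.val : FinHyp X → Set X) := continuous_induced_dom
  rw [← isOpen_compl_iff, isOpen_iff_mem_nhds]
  intro F hF
  -- separation data
  have sep : ∀ x y : X, ∃ uvp : Set X × Set X, IsOpen uvp.1 ∧ IsOpen uvp.2 ∧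
      (x ≠ y → x ∈ uvp.1 ∧ y ∈ uvp.2 ∧ Disjoint uvp.1 uvp.2) := by
    intro x y
    by_cases h : x = y
    · exact ⟨(univ, univ), isOpen_univ, isOpen_univ, fun hc => absurd h hc⟩
    · obtain ⟨u, v, hu, hv, hxu, hyv, hd⟩ := t2_separation h
      exact ⟨(u, v), hu, hv, fun _ => ⟨hxu, hyv, hd⟩⟩
  choose uv hu1 hu2 hprop using sep
  set S : Set X := (F : Set X) with hSdef
  have hSfin : S.Finite := F.2.1
  let U : X → Set X := fun x =>
    (⋂ y ∈ S \ {x}, ((uv x y).1 ∩ (uv y x).2)) ∩ ⋂ i ∈ {i : Fin n | x ∉ C i}, (C i)ᶜ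
  have hUopen : ∀ x, IsOpen (U x) := by
    intro x
    exact ((hSfin.diff : (S \ {x}).Finite).isOpen_biInter fun y _ => (hu1 x y).inter (hu2 y x)).inter
      ((Set.toFinite _).isOpen_biInter fun i _ => (hC i).isOpen_compl)
  have hxU : ∀ x ∈ S, x ∈ U x := by
    intro x hx
    have hne : ∀ y, y ∈ S \ {x} → y ≠ x := fun y hy h => hy.2 (Set.mem_singleton_iff.mpr h)
    refine ⟨Set.mem_iInter₂.2 fun y hy => ⟨(hprop x y (Ne.symm (hne y hy))).1, (hprop y x (hne y hy)).2.1⟩,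
      Set.mem_iInter₂.2 fun i hi => hi⟩
  have hdisj : ∀ x ∈ S, ∀ y ∈ S, ∀ z, z ∈ U x → z ∈ U y → x = y := by
    intro x hx y hy z hzx hzy
    by_contra hxy
    have h1 : z ∈ (uv x y).1 :=
      (Set.mem_iInter₂.1 hzx.1 y ⟨hy, fun h => hxy (Set.mem_singleton_iff.mp h).symm⟩).1
    have h2 : z ∈ (uv x y).2 :=
      (Set.mem_iInter₂.1 hzy.1 x ⟨hx, fun h => hxy (Set.mem_singleton_iff.mp h)⟩).2
    exact Set.disjoint_left.mp (hprop x y hxy).2.2 h1 h2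
  have hUC : ∀ x, ∀ i : Fin n, ∀ z, z ∈ U x → z ∈ C i → x ∈ C i := by
    intro x i z hz hzC
    by_contra hx
    exact (Set.mem_iInter₂.1 hz.2 i hx) hzC
  -- the Vietoris open neighborhood
  set O : Set (Set X) :=
    {G : Set X | G ⊆ ⋃ x ∈ S, U x} ∩ ⋂ x ∈ S, {G : Set X | (G ∩ U x).Nonempty} with hOdef
  have hOopen : IsOpen O := by
    refine IsOpen.inter ?_ (hSfin.isOpen_biInter fun x _ => ?_)
    · exact TopologicalSpace.isOpen_generateFrom_of_mem
        (Or.inl ⟨⋃ x ∈ S, U x, isOpen_biUnion fun x _ => hUopen x, rfl⟩)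
    · exact TopologicalSpace.isOpen_generateFrom_of_mem (Or.inr ⟨U x, hUopen x, rfl⟩)
  have hFO : F ∈ Subtype.val ⁻¹' O := by
    refine ⟨fun z hz => Set.mem_biUnion hz (hxU z hz), Set.mem_iInter₂.2 fun x hx => ⟨x, hx, hxU x hx⟩⟩
  refine Filter.mem_of_superset ((hOopen.preimage hcont).mem_nhds hFO) ?_
  rintro G hG ⟨f, hf, hfr⟩
  obtain ⟨hGsub, hGmeet⟩ := hG
  have hfi : ∀ i, ∃ x, x ∈ S ∧ f i ∈ U x := by
    intro i
    have : f i ∈ (G : Set X) := hfr ▸ Set.mem_range_self i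
    simpa using Set.mem_iUnion₂.1 (hGsub this)
  choose h hh1 hh2 using hfi
  have hhC : ∀ i, h i ∈ C i := fun i => hUC (h i) i (f i) (hh2 i) (hf i)
  have hsurj : ∀ x ∈ S, ∃ i, h i = x := by
    intro x hx
    obtain ⟨z, hzG, hzU⟩ := Set.mem_iInter₂.1 hGmeet x hx
    have : z ∈ Set.range f := hfr ▸ hzG
    obtain ⟨i, rfl⟩ := this
    exact ⟨i, hdisj (h i) (hh1 i) x hx (f i) (hh2 i) hzU⟩
  apply hF
  refine ⟨h, hhC, Set.Subset.antisymm ?_ ?_⟩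
  · intro x hx
    obtain ⟨i, rfl⟩ := hsurj x hx
    exact Set.mem_range_self i
  · rintro x ⟨i, rfl⟩
    exact hh1 i

lemma exists_fin_enum {α : Type*} {S : Set α} (h : S.Finite) (hn : S.Nonempty) :
    ∃ n : ℕ, 0 < n ∧ ∃ f : Fin n → α, S = Set.range f := by
  obtain ⟨n, f, -, hf⟩ := h.fin_param
  refine ⟨n, ?_, f, hf.symm⟩
  obtain ⟨x, hx⟩ := hn
  rw [← hf] at hx
  obtain ⟨i, -⟩ := hx
  exact i.pos

lemma inrmk_injective {A : Type*} (n : ℕ) :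
    Function.Injective (fun f : Fin n → A => (Sum.inr ⟨n, f⟩ : ℕ ⊕ (Σ m : ℕ, Fin m → A))) :=
  fun f g h => by simpa using h

/-- Let `(Xs s)_{s ∈ T}` be a Sierpiński stratification of a separable metrizable space `X`.
Let `T' = {∅} ∪ {⟨n⟩⌢(s₁*⋯*sₙ) : n ≥ 1, s₁*⋯*sₙ ∈ Tⁿ}`, where `Tⁿ` is the tree of
`n`-tuples of equal-length nodes of `T` ordered coordinatewise, and let
`Y ∅ = ℱ(X)` and `Y (⟨n⟩⌢(s₁*⋯*sₙ)) = φₙ[Xs s₁ × ⋯ × Xs sₙ]`.  Then `(Y t)_{t ∈ T'}` is a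
Sierpiński stratification of `ℱ(X)`. -/
theorem finHyp_sierpinskiStratification {X A : Type*} [TopologicalSpace X]
    [TopologicalSpace.SeparableSpace X] [TopologicalSpace.MetrizableSpace X]
    (T : Set (List A)) (Xs : List A → Set X)
    (hT : IsSierpinskiStratification T Xs)
    (Y : List (ℕ ⊕ (Σ m : ℕ, Fin m → A)) → Set (FinHyp X))
    (hYroot : Y [] = Set.univ)
    (hYnode : ∀ (n : ℕ), 0 < n → ∀ l : List (Fin n → A),
      (∀ i : Fin n, l.map (fun g => g i) ∈ T) →
      Y (encodeNode n l) = {F : FinHyp X |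
        ∃ f : Fin n → X, (∀ i, f i ∈ Xs (l.map (fun g => g i))) ∧ (F : Set X) = Set.range f}) :
    IsSierpinskiStratification
      (X := FinHyp X)
      ({[]} ∪ {w | ∃ (n : ℕ), 0 < n ∧ ∃ l : List (Fin n → A),
        (∀ i : Fin n, l.map (fun g => g i) ∈ T) ∧ w = encodeNode n l})
      Y := by
  classical
  have hnilT : ([] : List A) ∈ T := by
    obtain ⟨s, hs⟩ := hT.nonempty
    exact hT.prefix_closed s hs [] List.nil_prefix
  refine ⟨?_, ⟨[], Or.inl rfl⟩, ?_, ?_, hYroot, ?_, ?_⟩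
  -- countable alphabet
  · have := hT.countable_alphabet
    infer_instance
  -- prefix closed
  · rintro w (hw | ⟨n, hn, l, hl, rfl⟩) w' hpre
    · rw [Set.mem_singleton_iff] at hw
      subst hw
      rw [List.prefix_nil] at hpre
      exact Or.inl hpre
    · rcases List.prefix_cons_iff.mp hpre with rfl | ⟨t, rfl, ht⟩
      · exact Or.inl rfl
      · have hk : t = (l.map (fun f => Sum.inr ⟨n, f⟩)).take t.length :=
          List.prefix_iff_eq_take.mp ht
        refine Or.inr ⟨n, hn, l.take t.length, fun i => ?_, ?_⟩
        · have h1 : (l.take t.length).map (fun g => g i)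
              = (l.map (fun g => g i)).take t.length := by
            simp [List.map_take]
          rw [h1]
          exact hT.prefix_closed _ (hl i) _ (List.take_prefix _ _)
        · rw [hk]
          simp [encodeNode, List.map_take]
  -- closedness
  · rintro w (hw | ⟨n, hn, l, hl, rfl⟩)
    · rw [Set.mem_singleton_iff] at hw
      subst hw
      rw [hYroot]
      exact isClosed_univ
    · rw [hYnode n hn l hl]
      exact isClosed_witness (fun i => hT.isClosed _ (hl i))
  -- succ_eq
  · rintro w (hw | ⟨n, hn, l, hl, rfl⟩)
    · rw [Set.mem_singleton_iff] at hw
      subst hw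
      rw [hYroot]
      refine Set.Subset.antisymm (fun F _ => ?_) (Set.subset_univ _)
      obtain ⟨n, hn, f, hf⟩ := exists_fin_enum F.2.1 F.2.2
      refine Set.mem_biUnion (x := encodeNode n []) ?_ ?_
      · refine ⟨Or.inr ⟨n, hn, [], fun i => by simpa using hnilT, rfl⟩, Sum.inl n, by simp [encodeNode]⟩
      · rw [hYnode n hn [] (fun i => by simpa using hnilT)]
        exact ⟨f, fun i => by simp [hT.root], hf⟩
    · rw [hYnode n hn l hl]
      ext F
      simp only [Set.mem_iUnion, Set.mem_setOf_eq]
      constructor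
      · rintro ⟨f, hf, hfr⟩
        have hext : ∀ i : Fin n, ∃ a : A,
            (l.map (fun g => g i) ++ [a]) ∈ T ∧ f i ∈ Xs (l.map (fun g => g i) ++ [a]) := by
          intro i
          have hmem : f i ∈ Xs (l.map (fun g => g i)) := hf i
          rw [hT.succ_eq _ (hl i)] at hmem
          obtain ⟨t, ⟨htT, a, rfl⟩, hmem'⟩ := Set.mem_iUnion₂.1 hmem
          exact ⟨a, htT, hmem'⟩
        choose g hg1 hg2 using hext
        have hcond : ∀ i : Fin n, (l ++ [fun j => g j]).map (fun h => h i) ∈ T := by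
          intro i
          have : (l ++ [fun j => g j]).map (fun h => h i) = l.map (fun h => h i) ++ [g i] := by
            simp
          rw [this]
          exact hg1 i
        refine ⟨encodeNode n (l ++ [fun j => g j]),
          ⟨⟨Or.inr ⟨n, hn, _, hcond, rfl⟩, Sum.inr ⟨n, fun j => g j⟩, by simp [encodeNode]⟩, ?_⟩⟩
        rw [hYnode n hn _ hcond]
        refine ⟨f, fun i => ?_, hfr⟩
        have : (l ++ [fun j => g j]).map (fun h => h i) = l.map (fun h => h i) ++ [g i] := by simp
        rw [this]
        exact hg2 i
      · rintro ⟨t, ⟨⟨ht', a, hta⟩, hFt⟩⟩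
        rcases ht' with h0 | ⟨m, hm, l', hl', rfl⟩
        · rw [Set.mem_singleton_iff] at h0
          subst h0
          exact absurd (congrArg List.length hta) (by simp [encodeNode])
        · -- decode: m = n, l' = l ++ [g]
          have hta' : (Sum.inl m : ℕ ⊕ (Σ m : ℕ, Fin m → A)) :: l'.map (fun f => Sum.inr ⟨m, f⟩)
              = Sum.inl n :: (l.map (fun f => Sum.inr ⟨n, f⟩) ++ [a]) := by
            simpa [encodeNode] using hta
          obtain ⟨h1, h2⟩ := List.cons.inj hta'
          have hmn : m = n := Sum.inl.inj h1
          subst hmn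
          have ha : a ∈ l'.map (fun f => (Sum.inr ⟨m, f⟩ : ℕ ⊕ (Σ m : ℕ, Fin m → A))) := by
            rw [h2]
            exact List.mem_append_right _ (List.mem_singleton_self a)
          obtain ⟨g, hgl', rfl⟩ := List.mem_map.1 ha
          have hl'' : l' = l ++ [g] := by
            apply List.map_injective_iff.mpr (inrmk_injective m)
            rw [h2]
            simp
          subst hl''
          rw [hYnode m hm _ hl'] at hFt
          obtain ⟨f, hf, hfr⟩ := hFt
          refine ⟨f, fun i => ?_, hfr⟩
          have hchild : (l ++ [g]).map (fun h => h i) = l.map (fun h => h i) ++ [g i] := by simp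
          have hsub : Xs ((l ++ [g]).map (fun h => h i)) ⊆ Xs (l.map (fun h => h i)) := by
            rw [hT.succ_eq _ (hl i)]
            exact Set.subset_biUnion_of_mem ⟨hl' i, g i, hchild⟩
          exact hsub (hf i)
  -- branch convergence
  · intro σ hσ
    rcases hσ 1 with h1 | ⟨n, hn, l1, hl1, he1⟩
    · exact absurd (congrArg List.length (Set.mem_singleton_iff.mp h1)) (by simp)
    have hσ0 : σ 0 = Sum.inl n := by
      have hr1 : (List.range 1).map σ = [σ 0] := by simp [List.range_succ]
      rw [hr1, encodeNode] at he1
      exact (List.cons.inj he1).1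
    set σ' : ℕ → ℕ ⊕ (Σ m : ℕ, Fin m → A) := fun j => σ (j + 1) with hσ'def
    have hsplit : ∀ k, (List.range (k + 1)).map σ = σ 0 :: (List.range k).map σ' := by
      intro k
      rw [List.range_succ_eq_map, List.map_cons, List.map_map]
      rfl
    have key : ∀ k, ∃ l : List (Fin n → A), (∀ i : Fin n, l.map (fun g => g i) ∈ T) ∧
        (List.range k).map σ' = l.map (fun f => Sum.inr ⟨n, f⟩) ∧ l.length = k := by
      intro k
      rcases hσ (k + 1) with h | ⟨m, hm, l, hl, he⟩
      · exact absurd (congrArg List.length (Set.mem_singleton_iff.mp h)) (by simp)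
      · rw [hsplit k, encodeNode] at he
        obtain ⟨hhead, htail⟩ := List.cons.inj he
        have hmn : m = n := Sum.inl.inj (hhead.symm.trans hσ0)
        subst hmn
        refine ⟨l, hl, htail, ?_⟩
        have := congrArg List.length htail
        simpa using this.symm
    choose L hL1 hL2 hL3 using key
    have hcons : ∀ j : ℕ, ∃ g : Fin n → A, σ' j = Sum.inr ⟨n, g⟩ := by
      intro j
      have h := hL2 (j + 1)
      have hj1 := List.getElem_of_eq h (show j < ((List.range (j + 1)).map σ').length by simp)
      rw [List.getElem_map, List.getElem_map, List.getElem_range] at hj1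
      exact ⟨_, hj1⟩
    choose g hg using hcons
    have hLg : ∀ k, L k = (List.range k).map g := by
      intro k
      apply List.map_injective_iff.mpr (inrmk_injective n)
      rw [← hL2 k, List.map_map]
      apply List.map_congr_left
      intro j _
      exact hg j
    have hτT : ∀ (k : ℕ) (i : Fin n), ((List.range k).map g).map (fun h => h i) ∈ T := by
      intro k i
      have := hL1 k i
      rwa [hLg k] at this
    have hseg : ∀ k, (List.range (k + 1)).map σ = encodeNode n ((List.range k).map g) := by
      intro k
      rw [hsplit k, hσ0]
      simp only [encodeNode]
      rw [← hLg k, ← hL2 k]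
    have hbranch : ∀ i : Fin n, ∀ k, (List.range k).map (fun j => g j i) ∈ T := by
      intro i k
      have := hτT k i
      rwa [List.map_map] at this
    choose p hp using fun i : Fin n => hT.branch_converges _ (hbranch i)
    haveI : Nonempty (Fin n) := ⟨⟨0, hn⟩⟩
    refine ⟨⟨Set.range p, Set.finite_range p, Set.range_nonempty p⟩, ?_⟩
    intro V hV
    letI : TopologicalSpace (Set X) := vietoris ‹TopologicalSpace X›
    have hVc : V ∈ Filter.comap (Subtype.val : FinHyp X → Set X)
        (nhds (Subtype.val (⟨Set.range p, Set.finite_range p, Set.range_nonempty p⟩ : FinHyp X))) := by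
      rw [← nhds_induced]
      exact hV
    obtain ⟨W, hW, hWV⟩ := Filter.mem_comap.1 hVc
    obtain ⟨O, hOW, hOopen, hPO⟩ := mem_nhds_iff.1 hW
    have hgen : TopologicalSpace.GenerateOpen
        {S | (∃ U : Set X, IsOpen U ∧ S = {F : Set X | F ⊆ U}) ∨
             (∃ U : Set X, IsOpen U ∧ S = {F : Set X | (F ∩ U).Nonempty})} O := hOopen
    have main : ∀ O' : Set (Set X), TopologicalSpace.GenerateOpen
        {S | (∃ U : Set X, IsOpen U ∧ S = {F : Set X | F ⊆ U}) ∨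
             (∃ U : Set X, IsOpen U ∧ S = {F : Set X | (F ∩ U).Nonempty})} O' →
        Set.range p ∈ O' → ∀ᶠ k in Filter.atTop, ∀ f : Fin n → X,
          (∀ i, f i ∈ Xs ((List.range k).map (fun j => g j i))) → Set.range f ∈ O' := by
      intro O' hO'
      induction hO' with
      | basic S hS =>
        intro hPS
        rcases hS with ⟨U, hU, rfl⟩ | ⟨U, hU, rfl⟩
        · have hev : ∀ i : Fin n, ∀ᶠ k in Filter.atTop,
              Xs ((List.range k).map (fun j => g j i)) ⊆ U :=
            fun i => hp i U (hU.mem_nhds (hPS (Set.mem_range_self i)))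
          filter_upwards [Filter.eventually_all.2 hev] with k hk f hf
          rintro x ⟨i, rfl⟩
          exact hk i (hf i)
        · obtain ⟨x, hxP, hxU⟩ := hPS
          obtain ⟨i, rfl⟩ := hxP
          filter_upwards [hp i U (hU.mem_nhds hxU)] with k hk f hf
          exact ⟨f i, Set.mem_range_self i, hk (hf i)⟩
      | univ => exact fun _ => Filter.Eventually.of_forall fun k f _ => Set.mem_univ _
      | inter s t hs ht ih1 ih2 =>
        intro hP
        filter_upwards [ih1 hP.1, ih2 hP.2] with k a b f hf
        exact ⟨a f hf, b f hf⟩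
      | sUnion S hS ih =>
        intro hP
        obtain ⟨O1, hO1S, hPO1⟩ := hP
        filter_upwards [ih O1 hO1S hPO1] with k hk f hf
        exact ⟨O1, hO1S, hk f hf⟩
    have hfinal : ∀ᶠ k in Filter.atTop, Y ((List.range (k + 1)).map σ) ⊆ V := by
      filter_upwards [main O hgen hPO] with k hk
      rw [hseg k, hYnode n hn _ (hτT k)]
      rintro F ⟨f, hf, hfr⟩
      apply hWV
      show (F : Set X) ∈ W
      apply hOW
      rw [hfr]
      apply hk
      intro i
      have := hf i
      rwa [List.map_map] at this
    obtain ⟨N, hN⟩ := Filter.eventually_atTop.1 hfinal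
    refine Filter.eventually_atTop.2 ⟨N + 1, fun k hk => ?_⟩
    obtain ⟨k', rfl⟩ : ∃ k', k = k' + 1 := ⟨k - 1, by omega⟩
    exact hN k' (by omega)
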